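/- Let q be an odd prime power, n=(q+1)/2, and v ∈ F_q with both v and 1-v non-squares in F_q. Then the polynomial y^2 - y + v/4 is irreducible over F_q and each of its roots x in F_{q^2} satisfies x^n + (1-x)^n = 0. -/

import Mathlib

open Polynomial

theorem stmt6 (F : Type*) [Field F] [Fintype F] (hodd : Odd (Fintype.card F))
    (n : ℕ) (hn : n = (Fintype.card F + 1) / 2)
    (v : F) (hv : ¬ IsSquare v) (hv1 : ¬ IsSquare (1 - v)) :
    Irreducible (X ^ 2 - X + C (v / 4) : F[X]) ∧
      ∀ x : AlgebraicClosure F,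
        x ^ 2 - x + algebraMap F (AlgebraicClosure F) (v / 4) = 0 →
        x ^ n + (1 - x) ^ n = 0 := by
  classical
  set q := Fintype.card F with hqdef
  have hodd' : q % 2 = 1 := Nat.odd_iff.mp hodd
  have hq1 : 1 < q := Fintype.one_lt_card
  -- characteristic facts
  have hchar : ringChar F ≠ 2 := by
    intro h
    have := FiniteField.even_card_of_char_two (F := F) h
    omega
  have h2 : (2 : F) ≠ 0 := Ring.two_ne_zero hchar
  have h4 : (4 : F) ≠ 0 := by
    intro h
    apply h2
    have : (4 : F) = 2 * 2 := by norm_num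
    rw [this] at h
    rcases mul_eq_zero.mp h with h' | h' <;> exact h'
  have hvne : v ≠ 0 := by
    intro h; exact hv (h ▸ ⟨0, by ring⟩)
  have hv4ne : v / 4 ≠ 0 := div_ne_zero hvne h4
  have hv4ns : ¬ IsSquare (v / 4) := by
    rintro ⟨s, hs⟩
    exact hv ⟨2 * s, by field_simp at hs; linear_combination hs⟩
  -- no root in F
  have noroot : ∀ r : F, r ^ 2 - r + v / 4 ≠ 0 := by
    intro r hr
    exact hv1 ⟨2 * r - 1, by field_simp at hr ⊢; linear_combination -hr⟩
  -- Irreducibility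
  have hform : (X ^ 2 - X + C (v / 4) : F[X]) = C 1 * X ^ 2 + C (-1) * X + C (v / 4) := by
    simp only [map_one, map_neg, one_mul]; ring
  have hdeg : (X ^ 2 - X + C (v / 4) : F[X]).natDegree = 2 := by
    rw [hform]; exact natDegree_quadratic one_ne_zero
  have hirr : Irreducible (X ^ 2 - X + C (v / 4) : F[X]) := by
    rw [irreducible_iff_roots_eq_zero_of_degree_le_three (by rw [hdeg]) (by rw [hdeg]; norm_num)]
    rw [Multiset.eq_zero_iff_forall_notMem]
    intro r hr
    have hne : (X ^ 2 - X + C (v / 4) : F[X]) ≠ 0 := fun h => by simp [h] at hdeg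
    rw [mem_roots hne] at hr
    have := hr
    simp only [IsRoot, eval_add, eval_sub, eval_pow, eval_X, eval_C] at this
    exact noroot r this
  refine ⟨hirr, ?_⟩
  -- now the algebraic closure part
  intro x hx
  set c : AlgebraicClosure F := algebraMap F (AlgebraicClosure F) (v / 4) with hcdef
  have hinj : Function.Injective (algebraMap F (AlgebraicClosure F)) := (algebraMap F (AlgebraicClosure F)).injective
  -- frobenius facts
  obtain ⟨p, hp⟩ := CharP.exists F
  haveI := hp
  haveI hpK : CharP (AlgebraicClosure F) p := charP_of_injective_algebraMap hinj p
  obtain ⟨k, hpprime, hcard⟩ := FiniteField.card F p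
  haveI : Fact p.Prime := ⟨hpprime⟩
  have hfadd : ∀ a b : AlgebraicClosure F, (a + b) ^ q = a ^ q + b ^ q := by
    intro a b; rw [hqdef, hcard]; exact add_pow_char_pow a b p k
  have hfsub : ∀ a b : AlgebraicClosure F, (a - b) ^ q = a ^ q - b ^ q := by
    intro a b; rw [hqdef, hcard]; exact sub_pow_char_pow a b k
  have hcq : c ^ q = c := by
    rw [hcdef, ← map_pow, FiniteField.pow_card]
  -- x^q is also a root
  have hxq0 : (x ^ q) ^ 2 - x ^ q + c = 0 := by
    have e : (x ^ 2 - x + c) ^ q = (x ^ q) ^ 2 - x ^ q + c := by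
      rw [hfadd, hfsub, hcq, ← pow_mul, mul_comm 2 q, pow_mul]
    rw [← e, hx, zero_pow (by omega)]
  have hsplit : (x ^ q - x) * (x ^ q + x - 1) = 0 := by
    linear_combination hxq0 - hx
  -- fixed points of frobenius are in F
  have hfix : ∀ y : AlgebraicClosure F, y ^ q = y → ∃ a : F, algebraMap F (AlgebraicClosure F) a = y := by
    intro y hy
    have hsp : Splits (X ^ q - X : F[X]) := by
      rw [splits_iff_card_roots, FiniteField.roots_X_pow_card_sub_X,
        FiniteField.X_pow_card_sub_X_natDegree_eq F hq1]
      simp [hqdef]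
    have hne : (X ^ q - X : F[X]) ≠ 0 := by
      intro h
      have := FiniteField.X_pow_card_sub_X_natDegree_eq F hq1
      rw [h] at this; simp at this; omega
    have hroot : y ∈ ((X ^ q - X : F[X]).map (algebraMap F (AlgebraicClosure F))).roots := by
      rw [mem_roots (by simpa using (Polynomial.map_ne_zero_iff hinj).mpr hne)]
      simp [IsRoot, hy]
    rw [hsp.roots_map _, Multiset.mem_map] at hroot
    obtain ⟨a, _, ha⟩ := hroot
    exact ⟨a, ha⟩
  -- x^q = 1 - x
  have hxq : x ^ q = 1 - x := by
    rcases mul_eq_zero.mp hsplit with h | h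
    · exfalso
      obtain ⟨a, ha⟩ := hfix x (by linear_combination h)
      apply noroot a
      apply hinj
      rw [map_add, map_sub, map_pow, ha, map_zero, ← hcdef]
      exact hx
    · linear_combination h
  have h1xq : (1 - x) ^ q = x := by
    have := hfsub 1 x
    rw [one_pow, hxq] at this
    rw [this]; ring
  -- the value of c ^ n
  have hnq : n + n = q + 1 := by omega
  have hn2 : n = q / 2 + 1 := by omega
  have hv4pow : (v / 4) ^ (q / 2) = -1 := by
    rcases FiniteField.pow_dichotomy hchar hv4ne with h | h
    · exact absurd ((FiniteField.isSquare_iff hchar hv4ne).mpr h) hv4ns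
    · exact h
  have hcn : c ^ n = -c := by
    rw [hcdef, ← map_pow, hn2, pow_succ, hv4pow, neg_one_mul, map_neg]
  have hxc : x * (1 - x) = c := by linear_combination -hx
  -- final computation
  have e1 : x ^ n * x ^ n = x * (1 - x) := by
    rw [← pow_add, hnq, pow_succ, hxq]; ring
  have e2 : (1 - x) ^ n * (1 - x) ^ n = x * (1 - x) := by
    rw [← pow_add, hnq, pow_succ, h1xq]
  have e3 : x ^ n * (1 - x) ^ n = -(x * (1 - x)) := by
    rw [← mul_pow, hxc, hcn]
  have key : (x ^ n + (1 - x) ^ n) ^ 2 = 0 := by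
    linear_combination e1 + 2 * e3 + e2
  exact pow_eq_zero_iff (n := 2) (by norm_num) |>.mp key
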